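/- arXiv:1404.2725 — 2 statements merged into one kernel-verified Lean document; each statement's English description precedes it below -/
import Mathlib

section
/- There exists ε > 0, depending only on 𝒥, ℛ, (ā_r)_{r∈ℛ}, and C, such that for every x ∈ (0,∞)^E the following holds: writing, for each route r = (j_1^r, …, j_{K_r}^r), u_{k,r} = x_{j_k^r r} σ*_{j_k^r}(q) / q_{j_k^r} for 1 ≤ k ≤ K_r and u_{0,r} = u_{K_r+1, r} = ā_r, one has Σ_{r∈ℛ} Σ_{k=0}^{K_r} ( u_{k,r} − u_{k+1,r} )² ≥ ε. (Uniform strict negativity of the entropy drift terms.) -/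
open scoped Classical

/-- Per-link queue sizes `q j = ∑_{r ∋ j} x j r`, where route `r` consists of
the links `link r 0, …, link r (K r - 1)`. -/
noncomputable def qOf {J R : Type} [Fintype R] (K : R → ℕ) (link : R → ℕ → J)
    (x : J → R → ℝ) (j : J) : ℝ :=
  ∑ r ∈ Finset.univ.filter (fun r => ∃ k < K r, link r k = j), x j r

/-- The normalized flow terms along a route: `u r k = x_{j_k r} σ*_{j_k}(q) / q_{j_k}`
for `1 ≤ k ≤ K r` (with the `k`-th link of `r` being `link r (k-1)`), and
`u r k = ā_r` for `k = 0` and `k = K r + 1` (and at all other indices). -/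
noncomputable def uval {J R : Type} [Fintype R] (K : R → ℕ) (link : R → ℕ → J)
    (abar : R → ℝ) (sstar : (J → ℝ) → J → ℝ) (x : J → R → ℝ) (r : R) (k : ℕ) : ℝ :=
  if 1 ≤ k ∧ k ≤ K r then
    x (link r (k - 1)) r * sstar (qOf K link x) (link r (k - 1)) /
      qOf K link x (link r (k - 1))
  else abar r

/-- Uniform strict negativity of the entropy drift terms: there is an `ε > 0`,
depending only on the network data, such that for every positive state `x` the
sum over routes of the squared successive differences of the normalized flow
terms is at least `ε`. -/
theorem entropy_drift_uniform_gap {J R : Type} [Fintype J] [Fintype R]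
    [Nonempty J] [Nonempty R]
    (K : R → ℕ) (hK : ∀ r, 1 ≤ K r)
    (link : R → ℕ → J)
    (hlink_inj : ∀ r, ∀ k < K r, ∀ l < K r, link r k = link r l → k = l)
    (hcover : ∀ j, ∃ r, ∃ k < K r, link r k = j)
    (abar : R → ℝ) (habar_pos : ∀ r, 0 < abar r)
    (C : Set (J → ℝ)) (hC_compact : IsCompact C) (hC_convex : Convex ℝ C)
    (hC_int : (interior C).Nonempty) (hC_nonneg : ∀ s ∈ C, ∀ j, 0 ≤ s j)
    (habarJ_int :
      (fun j => ∑ r ∈ Finset.univ.filter (fun r => ∃ k < K r, link r k = j), abar r)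
        ∈ interior C)
    (sstar : (J → ℝ) → J → ℝ)
    (hsstar : ∀ q : J → ℝ, (∀ j, 0 ≤ q j) → q ≠ 0 →
      sstar q ∈ C ∧ (∀ j, 0 < q j → 0 < sstar q j) ∧
      ∀ s ∈ C, (∀ j, 0 < q j → 0 < s j) →
        ∑ j ∈ Finset.univ.filter (fun j => 0 < q j), q j * Real.log (s j)
          ≤ ∑ j ∈ Finset.univ.filter (fun j => 0 < q j), q j * Real.log (sstar q j)) :
    ∃ ε > (0 : ℝ), ∀ x : J → R → ℝ, (∀ r, ∀ k < K r, 0 < x (link r k) r) →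
      ε ≤ ∑ r, ∑ k ∈ Finset.range (K r + 1),
        (uval K link abar sstar x r k - uval K link abar sstar x r (k + 1)) ^ 2 := by
  classical
  obtain ⟨δ, hδ, hball⟩ :
      ∃ δ > (0:ℝ), Metric.ball
        (fun j => ∑ r ∈ Finset.univ.filter (fun r => ∃ k < K r, link r k = j), abar r) δ
        ⊆ interior C :=
    Metric.isOpen_iff.mp isOpen_interior _ habarJ_int
  have hcardR : 0 < Fintype.card R := Fintype.card_pos
  set Nn : ℕ := Fintype.card R * (Finset.univ.sup K + 1) with hNn
  have hNpos : 0 < (Nn : ℝ) := by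
    have : 0 < Nn := Nat.mul_pos hcardR (Nat.succ_pos _)
    exact_mod_cast this
  refine ⟨(δ / Nn)^2, by positivity, ?_⟩
  intro x hx
  by_contra hcon
  push_neg at hcon
  set S := ∑ r, ∑ k ∈ Finset.range (K r + 1),
      (uval K link abar sstar x r k - uval K link abar sstar x r (k + 1)) ^ 2 with hSdef
  have hS0 : 0 ≤ S := by
    rw [hSdef]
    exact Finset.sum_nonneg fun r _ => Finset.sum_nonneg fun k _ => sq_nonneg _
  have hq : ∀ j, 0 < qOf K link x j := by
    intro j
    obtain ⟨r0, k0, hk0, hl0⟩ := hcover j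
    unfold qOf
    apply Finset.sum_pos
    · intro r hr
      obtain ⟨k, hk, hl⟩ := (Finset.mem_filter.mp hr).2
      rw [← hl]; exact hx r k hk
    · exact ⟨r0, Finset.mem_filter.mpr ⟨Finset.mem_univ _, k0, hk0, hl0⟩⟩
  have hqne : qOf K link x ≠ 0 := by
    intro h
    have hj := hq (Classical.arbitrary J)
    rw [h] at hj
    simp at hj
  obtain ⟨hmemC, hspos, hmax⟩ := hsstar (qOf K link x) (fun j => (hq j).le) hqne
  -- the maximizer is never interior
  have hnotint : sstar (qOf K link x) ∉ interior C := by
    intro hint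
    obtain ⟨η, hη, hηb⟩ := Metric.isOpen_iff.mp isOpen_interior _ hint
    set s : J → ℝ := fun j => sstar (qOf K link x) j + η / 2 with hsdef
    have hsC : s ∈ C := by
      apply interior_subset
      apply hηb
      rw [Metric.mem_ball, dist_pi_lt_iff hη]
      intro j
      rw [Real.dist_eq]
      simp only [hsdef]
      rw [add_sub_cancel_left, abs_of_pos (by linarith)]
      linarith
    have hspos' : ∀ j, 0 < qOf K link x j → 0 < s j := by
      intro j hj
      have := hspos j hj
      simp only [hsdef]; linarith
    have hle := hmax s hsC hspos'
    have hstrict :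
        ∑ j ∈ Finset.univ.filter (fun j => 0 < qOf K link x j),
            qOf K link x j * Real.log (sstar (qOf K link x) j)
        < ∑ j ∈ Finset.univ.filter (fun j => 0 < qOf K link x j),
            qOf K link x j * Real.log (s j) := by
      apply Finset.sum_lt_sum_of_nonempty
      · rw [Finset.filter_true_of_mem (fun j _ => hq j)]
        exact Finset.univ_nonempty
      · intro j hj
        have hqj := hq j
        have h1 : sstar (qOf K link x) j < s j := by simp only [hsdef]; linarith
        exact mul_lt_mul_of_pos_left (Real.log_lt_log (hspos j hqj) h1) hqj
    linarith
  -- per-term bounds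
  have htermS : ∀ r, ∀ k, k < K r + 1 →
      (uval K link abar sstar x r k - uval K link abar sstar x r (k+1))^2 ≤ S := by
    intro r k hk
    have h1 : ∑ k ∈ Finset.range (K r + 1),
        (uval K link abar sstar x r k - uval K link abar sstar x r (k+1))^2 ≤ S := by
      rw [hSdef]
      exact Finset.single_le_sum
        (f := fun r => ∑ k ∈ Finset.range (K r + 1),
          (uval K link abar sstar x r k - uval K link abar sstar x r (k+1))^2)
        (fun r _ => Finset.sum_nonneg fun k _ => sq_nonneg _) (Finset.mem_univ r)
    have h2 : (uval K link abar sstar x r k - uval K link abar sstar x r (k+1))^2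
        ≤ ∑ k ∈ Finset.range (K r + 1),
          (uval K link abar sstar x r k - uval K link abar sstar x r (k+1))^2 :=
      Finset.single_le_sum
        (f := fun k => (uval K link abar sstar x r k - uval K link abar sstar x r (k+1))^2)
        (fun k _ => sq_nonneg _) (Finset.mem_range.mpr hk)
    linarith
  have hdiff : ∀ r, ∀ k, k < K r + 1 →
      |uval K link abar sstar x r k - uval K link abar sstar x r (k+1)| ≤ Real.sqrt S := by
    intro r k hk
    rw [← Real.sqrt_sq_eq_abs]
    exact Real.sqrt_le_sqrt (htermS r k hk)
  have hsqrt0 : 0 ≤ Real.sqrt S := Real.sqrt_nonneg S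
  have hbound : ∀ r, ∀ k, k ≤ K r →
      |uval K link abar sstar x r k - abar r| ≤ k * Real.sqrt S := by
    intro r k
    induction k with
    | zero => intro _; simp [uval]
    | succ n ih =>
      intro hn
      have h1 := ih (Nat.le_of_succ_le hn)
      have h2 := hdiff r n (by omega)
      have h3 : |uval K link abar sstar x r (n+1) - abar r|
          ≤ |uval K link abar sstar x r (n+1) - uval K link abar sstar x r n|
            + |uval K link abar sstar x r n - abar r| := abs_sub_le _ _ _
      rw [abs_sub_comm] at h2
      push_cast
      nlinarith
  -- per-link identity
  have hsum : ∀ j, ∑ r ∈ Finset.univ.filter (fun r => ∃ k < K r, link r k = j),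
      x j r * sstar (qOf K link x) j / qOf K link x j = sstar (qOf K link x) j := by
    intro j
    rw [← Finset.sum_div, ← Finset.sum_mul]
    have h1 : ∑ r ∈ Finset.univ.filter (fun r => ∃ k < K r, link r k = j), x j r
        = qOf K link x j := rfl
    rw [h1, mul_comm, mul_div_assoc, div_self (hq j).ne', mul_one]
  have hKsup : ∀ r, K r ≤ Finset.univ.sup K := fun r => Finset.le_sup (f := K) (Finset.mem_univ r)
  have hlinkB : ∀ j,
      |sstar (qOf K link x) j
        - ∑ r ∈ Finset.univ.filter (fun r => ∃ k < K r, link r k = j), abar r|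
      ≤ (Nn : ℝ) * Real.sqrt S := by
    intro j
    have hterm' : ∀ r ∈ Finset.univ.filter (fun r => ∃ k < K r, link r k = j),
        |x j r * sstar (qOf K link x) j / qOf K link x j - abar r|
          ≤ (((Finset.univ.sup K : ℕ) : ℝ) + 1) * Real.sqrt S := by
      intro r hr
      obtain ⟨k, hk, hl⟩ := (Finset.mem_filter.mp hr).2
      have heq : x j r * sstar (qOf K link x) j / qOf K link x j
          = uval K link abar sstar x r (k+1) := by
        rw [uval, if_pos ⟨Nat.le_add_left 1 k, hk⟩]
        simp [hl]
      rw [heq]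
      have hb := hbound r (k+1) hk
      have hle : ((k:ℝ)+1) ≤ ((Finset.univ.sup K : ℕ) : ℝ) + 1 := by
        have : k + 1 ≤ Finset.univ.sup K + 1 := by
          have := hKsup r; omega
        exact_mod_cast this
      calc |uval K link abar sstar x r (k+1) - abar r| ≤ ((k:ℝ)+1) * Real.sqrt S := by
            push_cast at hb; exact hb
        _ ≤ (((Finset.univ.sup K : ℕ) : ℝ) + 1) * Real.sqrt S :=
            mul_le_mul_of_nonneg_right hle hsqrt0
    calc |sstar (qOf K link x) j
          - ∑ r ∈ Finset.univ.filter (fun r => ∃ k < K r, link r k = j), abar r|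
        = |∑ r ∈ Finset.univ.filter (fun r => ∃ k < K r, link r k = j),
            (x j r * sstar (qOf K link x) j / qOf K link x j - abar r)| := by
          rw [Finset.sum_sub_distrib, hsum j]
      _ ≤ ∑ r ∈ Finset.univ.filter (fun r => ∃ k < K r, link r k = j),
            |x j r * sstar (qOf K link x) j / qOf K link x j - abar r| :=
          Finset.abs_sum_le_sum_abs _ _
      _ ≤ ∑ _r ∈ Finset.univ.filter (fun r => ∃ k < K r, link r k = j),
            (((Finset.univ.sup K : ℕ) : ℝ) + 1) * Real.sqrt S := Finset.sum_le_sum hterm'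
      _ = ((Finset.univ.filter (fun r => ∃ k < K r, link r k = j)).card : ℝ)
            * ((((Finset.univ.sup K : ℕ) : ℝ) + 1) * Real.sqrt S) := by
          rw [Finset.sum_const, nsmul_eq_mul]
      _ ≤ (Nn : ℝ) * Real.sqrt S := by
          have hcard : ((Finset.univ.filter (fun r => ∃ k < K r, link r k = j)).card : ℝ)
              ≤ (Fintype.card R : ℝ) := by
            exact_mod_cast Finset.card_filter_le _ _
          have hN : (Nn : ℝ) = (Fintype.card R : ℝ) * (((Finset.univ.sup K : ℕ) : ℝ) + 1) := by
            rw [hNn]; push_cast; ring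
          rw [hN, mul_assoc]
          apply mul_le_mul_of_nonneg_right hcard
          positivity
  -- conclude
  have hSlt : Real.sqrt S < δ / Nn := by
    have h := Real.sqrt_lt_sqrt hS0 hcon
    rwa [Real.sqrt_sq (by positivity)] at h
  apply hnotint
  apply hball
  rw [Metric.mem_ball, dist_pi_lt_iff hδ]
  intro j
  rw [Real.dist_eq]
  calc |sstar (qOf K link x) j
        - ∑ r ∈ Finset.univ.filter (fun r => ∃ k < K r, link r k = j), abar r|
      ≤ (Nn : ℝ) * Real.sqrt S := hlinkB j
    _ < (Nn : ℝ) * (δ / Nn) := mul_lt_mul_of_pos_left hSlt hNpos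
    _ = δ := by field_simp
end

section
/- There exists ε > 0, depending only on 𝒥, ℛ, (ā_r)_{r∈ℛ}, and C, with the following property. Let x : [0,∞) → [0,∞)^E be locally absolutely continuous and suppose that at almost every t ≥ 0 with x(t) ∈ (0,∞)^E, each coordinate x_{jr} is differentiable at t with x_{jr}′(t) = u_{j_−^r r}(t) − u_{jr}(t), where u_{jr}(t) = x_{jr}(t) σ*_j(q(t)) / q_j(t), j_−^r denotes the link preceding j on route r, and when j is the first link of route r the inflow term u_{j_−^r r}(t) is replaced by ā_r. Then at almost every t ≥ 0 with x(t) ∈ (0,∞)^E, the function t ↦ H(x(t)) is differentiable at t and (d/dt) H(x(t)) ≤ −ε. -/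
open MeasureTheory Filter Topology
open scoped Classical

set_option linter.unusedSectionVars false
set_option maxHeartbeats 1000000

/-- The entropy Lyapunov function
`H(x) = ∑_{(j,r)∈E} x j r * log (x j r * σ*ⱼ(q) / (qⱼ * ā_r))`. -/
noncomputable def Hfun {J R : Type} [Fintype J] [Fintype R] (K : R → ℕ)
    (link : R → ℕ → J) (abar : R → ℝ) (sstar : (J → ℝ) → J → ℝ)
    (x : J → R → ℝ) : ℝ :=
  ∑ j, ∑ r ∈ Finset.univ.filter (fun r => ∃ k < K r, link r k = j),
    x j r * Real.log (x j r * sstar (qOf K link x) j / (qOf K link x j * abar r))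



section Sums
variable {J R : Type} [Fintype J] [Fintype R] (K : R → ℕ) (link : R → ℕ → J)

lemma sum_filter_const (hinj : ∀ r, ∀ k < K r, ∀ l < K r, link r k = link r l → k = l)
    (r : R) (j : J) (c : ℝ) :
    ∑ _k ∈ (Finset.range (K r)).filter (fun k => link r k = j), c
      = if ∃ k < K r, link r k = j then c else 0 := by
  by_cases h : ∃ k < K r, link r k = j
  · obtain ⟨k0, hk0, hl0⟩ := h
    have hset : (Finset.range (K r)).filter (fun k => link r k = j) = {k0} := by
      ext k
      simp only [Finset.mem_filter, Finset.mem_range, Finset.mem_singleton]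
      constructor
      · rintro ⟨hk, hl⟩
        exact hinj r k hk k0 hk0 (by rw [hl, hl0])
      · rintro rfl; exact ⟨hk0, hl0⟩
    rw [hset, if_pos ⟨k0, hk0, hl0⟩, Finset.sum_singleton]
  · rw [if_neg h]
    have hset : (Finset.range (K r)).filter (fun k => link r k = j) = ∅ := by
      rw [Finset.filter_eq_empty_iff]
      intro k hk hl
      exact h ⟨k, Finset.mem_range.1 hk, hl⟩
    rw [hset, Finset.sum_empty]

lemma L3 (hinj : ∀ r, ∀ k < K r, ∀ l < K r, link r k = link r l → k = l)
    (f : J → R → ℝ) (j : J) :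
    ∑ r ∈ Finset.univ.filter (fun r => ∃ k < K r, link r k = j), f j r
      = ∑ r, ∑ k ∈ (Finset.range (K r)).filter (fun k => link r k = j), f (link r k) r := by
  rw [Finset.sum_filter]
  refine Finset.sum_congr rfl fun r _ => ?_
  rw [Finset.sum_congr rfl (fun k hk => ?_), sum_filter_const K link hinj r j (f j r)]
  · rw [(Finset.mem_filter.1 hk).2]

lemma L2 (g : R → ℕ → ℝ) :
    ∑ j, ∑ r, ∑ k ∈ (Finset.range (K r)).filter (fun k => link r k = j), g r k
      = ∑ r, ∑ k ∈ Finset.range (K r), g r k := by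
  rw [Finset.sum_comm]
  exact Finset.sum_congr rfl fun r _ =>
    Finset.sum_fiberwise_of_maps_to (fun k _ => Finset.mem_univ _) _

lemma L1 (hinj : ∀ r, ∀ k < K r, ∀ l < K r, link r k = link r l → k = l)
    (f : J → R → ℝ) :
    ∑ j, ∑ r ∈ Finset.univ.filter (fun r => ∃ k < K r, link r k = j), f j r
      = ∑ r, ∑ k ∈ Finset.range (K r), f (link r k) r := by
  rw [Finset.sum_congr rfl fun j _ => L3 K link hinj f j, L2]

end Sums


lemma sqrt_sq_le_phi {a b : ℝ} (ha : 0 < a) (hb : 0 < b) :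
    (Real.sqrt b - Real.sqrt a) ^ 2 ≤ b - a - a * Real.log (b / a) := by
  have hba : 0 < b / a := div_pos hb ha
  have h1 : Real.log (b / a) ≤ 2 * (Real.sqrt (b / a) - 1) := by
    have hls : Real.log (b / a) = 2 * Real.log (Real.sqrt (b / a)) := by
      nth_rewrite 1 [← Real.sq_sqrt hba.le]
      rw [sq, Real.log_mul (Real.sqrt_pos.2 hba).ne' (Real.sqrt_pos.2 hba).ne']
      ring
    rw [hls]
    have := Real.log_le_sub_one_of_pos (Real.sqrt_pos.2 hba)
    linarith
  have h2 : a * Real.sqrt (b / a) = Real.sqrt a * Real.sqrt b := by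
    have e1 : a * Real.sqrt (b / a) = Real.sqrt (a ^ 2 * (b / a)) := by
      rw [Real.sqrt_mul (sq_nonneg a), Real.sqrt_sq ha.le]
    have e2 : a ^ 2 * (b / a) = a * b := by
      field_simp
    rw [e1, e2, Real.sqrt_mul ha.le]
  nlinarith [h1, h2, Real.sq_sqrt ha.le, Real.sq_sqrt hb.le,
    mul_le_mul_of_nonneg_left h1 ha.le]

lemma g_nonpos {w c : ℝ} (hw : 0 < w) (hc : 0 < c) :
    w - c - w * Real.log (w / c) ≤ 0 := by
  have h1 : Real.log (c / w) ≤ c / w - 1 := Real.log_le_sub_one_of_pos (div_pos hc hw)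
  have h2 : Real.log (c / w) = - Real.log (w / c) := by
    rw [← Real.log_inv, inv_div]
  have h3 : w * Real.log (c / w) ≤ w * (c / w - 1) :=
    mul_le_mul_of_nonneg_left h1 hw.le
  have h4 : w * (c / w - 1) = c - w := by field_simp
  rw [h2] at h3
  linarith [h3]


variable {J : Type} [Fintype J] [Nonempty J]

/-- Uniform positive lower bound for the proportionally-fair allocation near a
positive queue vector. -/
lemma sstar_lower
    (C : Set (J → ℝ)) (M : ℝ) (hM1 : 1 ≤ M) (hM : ∀ s ∈ C, ∀ j, s j ≤ M)
    (y : J → ℝ) (hyC : y ∈ C) (hy : ∀ j, 0 < y j)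
    (sstar : (J → ℝ) → J → ℝ)
    (hsstar : ∀ q : J → ℝ, (∀ j, 0 ≤ q j) → q ≠ 0 →
      sstar q ∈ C ∧ (∀ j, 0 < q j → 0 < sstar q j) ∧
      ∀ s ∈ C, (∀ j, 0 < q j → 0 < s j) →
        ∑ j ∈ Finset.univ.filter (fun j => 0 < q j), q j * Real.log (s j)
          ≤ ∑ j ∈ Finset.univ.filter (fun j => 0 < q j), q j * Real.log (sstar q j))
    (q0 : J → ℝ) (hq0 : ∀ j, 0 < q0 j) :
    ∃ ρ > (0:ℝ), ∀ q : J → ℝ, (∀ j, q0 j / 2 ≤ q j) → (∀ j, q j ≤ 2 * q0 j) →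
      ∀ j, ρ ≤ sstar q j := by
  set A : ℝ := (∑ j, (2 * q0 j) * |Real.log (y j)|) + ∑ j, (2 * q0 j) * Real.log M
    with hA_def
  have hlogM : 0 ≤ Real.log M := Real.log_nonneg hM1
  have hA1 : 0 ≤ ∑ j, (2 * q0 j) * |Real.log (y j)| :=
    Finset.sum_nonneg fun j _ =>
      mul_nonneg (by linarith [hq0 j]) (abs_nonneg _)
  have hA2 : 0 ≤ ∑ j, (2 * q0 j) * Real.log M :=
    Finset.sum_nonneg fun j _ =>
      mul_nonneg (by linarith [hq0 j]) hlogM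
  have hA_nonneg : 0 ≤ A := by rw [hA_def]; linarith
  set B : ℝ := Finset.univ.sup' Finset.univ_nonempty (fun j => 4 * A / q0 j) with hB_def
  refine ⟨Real.exp (-B), Real.exp_pos _, ?_⟩
  intro q hql hqu j0
  have hq_pos : ∀ j, 0 < q j := fun j => lt_of_lt_of_le (by linarith [hq0 j]) (hql j)
  have hq_nonneg : ∀ j, 0 ≤ q j := fun j => (hq_pos j).le
  have hqne : q ≠ 0 := by
    intro h
    have := hq_pos (Classical.arbitrary J)
    rw [h] at this; simp at this
  obtain ⟨hsC, hspos, hopt⟩ := hsstar q hq_nonneg hqne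
  have hcomp := hopt y hyC (fun j _ => hy j)
  rw [Finset.filter_true_of_mem (fun j _ => hq_pos j)] at hcomp
  set s : J → ℝ := sstar q with hs_def
  have hs_pos : ∀ j, 0 < s j := fun j => hspos j (hq_pos j)
  -- lower bound for ∑ q log y
  have hlb : -A ≤ ∑ j, q j * Real.log (y j) := by
    have : ∀ j ∈ Finset.univ, -((2 * q0 j) * |Real.log (y j)|) ≤ q j * Real.log (y j) := by
      intro j _
      have h1 : |q j * Real.log (y j)| ≤ (2 * q0 j) * |Real.log (y j)| := by
        rw [abs_mul, abs_of_nonneg (hq_nonneg j)]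
        exact mul_le_mul_of_nonneg_right (hqu j) (abs_nonneg _)
      linarith [neg_abs_le (q j * Real.log (y j))]
    have := Finset.sum_le_sum this
    rw [Finset.sum_neg_distrib] at this
    rw [hA_def]; linarith
  -- upper bound for partial sums of ∑ q log s
  have hub : ∀ j, q j * Real.log (s j) ≤ (2 * q0 j) * Real.log M := by
    intro j
    have hsM : s j ≤ M := hM s hsC j
    have hlog : Real.log (s j) ≤ Real.log M := Real.log_le_log (hs_pos j) hsM
    rcases le_or_gt (Real.log (s j)) 0 with h | h
    · have : q j * Real.log (s j) ≤ 0 := mul_nonpos_of_nonneg_of_nonpos (hq_nonneg j) h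
      have : (0:ℝ) ≤ (2 * q0 j) * Real.log M :=
        mul_nonneg (by linarith [hq0 j]) hlogM
      linarith [mul_nonpos_of_nonneg_of_nonpos (hq_nonneg j) h]
    · calc q j * Real.log (s j) ≤ (2 * q0 j) * Real.log (s j) :=
            mul_le_mul_of_nonneg_right (hqu j) h.le
        _ ≤ (2 * q0 j) * Real.log M := by
            have := (hq0 j).le
            exact mul_le_mul_of_nonneg_left hlog (by positivity)
  have hkey : -(2 * A) ≤ q j0 * Real.log (s j0) := by
    have hsplit : q j0 * Real.log (s j0)
        = (∑ j, q j * Real.log (s j)) - ∑ j ∈ Finset.univ.erase j0, q j * Real.log (s j) := by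
      rw [eq_sub_iff_add_eq]
      exact Finset.add_sum_erase Finset.univ (fun j => q j * Real.log (s j)) (Finset.mem_univ j0)
    have h2 : ∑ j ∈ Finset.univ.erase j0, q j * Real.log (s j)
        ≤ ∑ j ∈ Finset.univ.erase j0, (2 * q0 j) * Real.log M :=
      Finset.sum_le_sum fun j _ => hub j
    have h3 : ∑ j ∈ Finset.univ.erase j0, (2 * q0 j) * Real.log M
        ≤ ∑ j, (2 * q0 j) * Real.log M := by
      apply Finset.sum_le_sum_of_subset_of_nonneg (Finset.erase_subset _ _)
      intro j _ _
      exact mul_nonneg (by linarith [hq0 j]) hlogM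
    rw [hsplit, hA_def]
    linarith
  have hlog_lb : -(4 * A) / q0 j0 ≤ Real.log (s j0) := by
    have h1 : -(2 * A) / q j0 ≤ Real.log (s j0) := by
      rw [div_le_iff₀ (hq_pos j0)]
      linarith [hkey]
    have h2 : -(4 * A) / q0 j0 ≤ -(2 * A) / q j0 := by
      rw [div_le_div_iff₀ (hq0 j0) (hq_pos j0)]
      nlinarith [hql j0, hq0 j0, hq_pos j0, hA_nonneg]
    linarith
  have hB_ge : 4 * A / q0 j0 ≤ B := by
    rw [hB_def]
    exact Finset.le_sup' (fun j => 4 * A / q0 j) (Finset.mem_univ j0)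
  calc Real.exp (-B) ≤ Real.exp (Real.log (s j0)) := by
        apply Real.exp_le_exp.2
        have : -(4 * A) / q0 j0 = -(4 * A / q0 j0) := by ring
        rw [this] at hlog_lb
        linarith
    _ = s j0 := Real.exp_log (hs_pos j0)

lemma sstar_limit
    (C : Set (J → ℝ)) (hC_compact : IsCompact C) (hC_convex : Convex ℝ C)
    (M : ℝ) (hM1 : 1 ≤ M) (hM : ∀ s ∈ C, ∀ j, s j ≤ M)
    (y : J → ℝ) (hyC : y ∈ C) (hy : ∀ j, 0 < y j)
    (sstar : (J → ℝ) → J → ℝ)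
    (hsstar : ∀ q : J → ℝ, (∀ j, 0 ≤ q j) → q ≠ 0 →
      sstar q ∈ C ∧ (∀ j, 0 < q j → 0 < sstar q j) ∧
      ∀ s ∈ C, (∀ j, 0 < q j → 0 < s j) →
        ∑ j ∈ Finset.univ.filter (fun j => 0 < q j), q j * Real.log (s j)
          ≤ ∑ j ∈ Finset.univ.filter (fun j => 0 < q j), q j * Real.log (sstar q j))
    (q0 : J → ℝ) (hq0 : ∀ j, 0 < q0 j)
    (p : ℕ → J → ℝ) (hp_pos : ∀ n j, 0 < p n j)
    (hp_lim : Tendsto p atTop (𝓝 q0))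
    (a : J → ℝ) (ha_lim : Tendsto (fun n => sstar (p n)) atTop (𝓝 a)) :
    a = sstar q0 := by
  have hp_j : ∀ j, Tendsto (fun n => p n j) atTop (𝓝 (q0 j)) :=
    fun j => tendsto_pi_nhds.1 hp_lim j
  have hp_ne : ∀ n, p n ≠ 0 := by
    intro n h
    have := hp_pos n (Classical.arbitrary J)
    rw [h] at this; simp at this
  have hp_nonneg : ∀ n, ∀ j, (0:ℝ) ≤ p n j := fun n j => (hp_pos n j).le
  have hfilt : ∀ n, (Finset.univ.filter fun j => 0 < p n j) = Finset.univ :=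
    fun n => Finset.filter_true_of_mem (fun j _ => hp_pos n j)
  have hfilt0 : (Finset.univ.filter fun j => 0 < q0 j) = Finset.univ :=
    Finset.filter_true_of_mem (fun j _ => hq0 j)
  obtain ⟨ρ, hρ_pos, hρ⟩ := sstar_lower C M hM1 hM y hyC hy sstar hsstar q0 hq0
  have hbox : ∀ᶠ n in atTop, (∀ j, q0 j / 2 ≤ p n j) ∧ (∀ j, p n j ≤ 2 * q0 j) := by
    apply Filter.Eventually.and
    · rw [eventually_all]
      intro j
      exact (hp_j j).eventually ((eventually_gt_nhds (by linarith [hq0 j])).mono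
        fun x hx => hx.le)
    · rw [eventually_all]
      intro j
      exact (hp_j j).eventually ((eventually_lt_nhds (by linarith [hq0 j])).mono
        fun x hx => hx.le)
  have ha_mem : a ∈ C :=
    hC_compact.isClosed.mem_of_tendsto ha_lim
      (Filter.Eventually.of_forall fun n => (hsstar (p n) (hp_nonneg n) (hp_ne n)).1)
  have ha_lb : ∀ j, ρ ≤ a j := by
    intro j
    refine ge_of_tendsto (tendsto_pi_nhds.1 ha_lim j) ?_
    exact hbox.mono fun n hb => hρ (p n) hb.1 hb.2 j
  have ha_pos : ∀ j, 0 < a j := fun j => lt_of_lt_of_le hρ_pos (ha_lb j)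
  -- value convergence
  have hlog_lim : ∀ j, Tendsto (fun n => Real.log (sstar (p n) j)) atTop (𝓝 (Real.log (a j))) :=
    fun j => (Real.continuousAt_log (ha_pos j).ne').tendsto.comp (tendsto_pi_nhds.1 ha_lim j)
  have hVa : Tendsto (fun n => ∑ j, p n j * Real.log (sstar (p n) j)) atTop
      (𝓝 (∑ j, q0 j * Real.log (a j))) := by
    apply tendsto_finset_sum
    intro j _
    exact (hp_j j).mul (hlog_lim j)
  have hopt_a : ∀ s' ∈ C, (∀ j, 0 < s' j) →
      ∑ j, q0 j * Real.log (s' j) ≤ ∑ j, q0 j * Real.log (a j) := by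
    intro s' hs'C hs'pos
    have hLHS : Tendsto (fun n => ∑ j, p n j * Real.log (s' j)) atTop
        (𝓝 (∑ j, q0 j * Real.log (s' j))) := by
      apply tendsto_finset_sum
      intro j _
      exact (hp_j j).mul_const _
    refine le_of_tendsto_of_tendsto' hLHS hVa fun n => ?_
    have h := (hsstar (p n) (hp_nonneg n) (hp_ne n)).2.2 s' hs'C (fun j _ => hs'pos j)
    rwa [hfilt n] at h
  obtain ⟨hs0C, hs0pos', hopt0⟩ := hsstar q0 (fun j => (hq0 j).le)
    (by intro h; have := hq0 (Classical.arbitrary J); rw [h] at this; simp at this)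
  set s0 : J → ℝ := sstar q0 with hs0_def
  have hs0_pos : ∀ j, 0 < s0 j := fun j => hs0pos' j (hq0 j)
  have hVa_le : ∑ j, q0 j * Real.log (a j) ≤ ∑ j, q0 j * Real.log (s0 j) := by
    have h := hopt0 a ha_mem (fun j _ => ha_pos j)
    rwa [hfilt0] at h
  have hVs_le : ∑ j, q0 j * Real.log (s0 j) ≤ ∑ j, q0 j * Real.log (a j) :=
    hopt_a s0 hs0C hs0_pos
  by_contra hne
  obtain ⟨j1, hj1⟩ := Function.ne_iff.1 hne
  set m : J → ℝ := fun j => (a j + s0 j) / 2 with hm_def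
  have hmC : m ∈ C := by
    have h := hC_convex ha_mem hs0C (by norm_num : (0:ℝ) ≤ 1/2)
      (by norm_num : (0:ℝ) ≤ 1/2) (by norm_num)
    have : m = (1/2 : ℝ) • a + (1/2 : ℝ) • s0 := by
      funext j
      simp [hm_def, Pi.smul_apply, smul_eq_mul]
      ring
    rwa [this]
  have hm_pos : ∀ j, 0 < m j := fun j => by
    have := ha_pos j; have := hs0_pos j
    simp only [hm_def]; linarith
  have hj_le : ∀ j, (Real.log (a j) + Real.log (s0 j)) / 2 ≤ Real.log (m j) := by
    intro j
    have h1 : (Real.log (a j) + Real.log (s0 j)) / 2 = Real.log (Real.sqrt (a j * s0 j)) := by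
      rw [Real.log_sqrt (mul_nonneg (ha_pos j).le (hs0_pos j).le),
        Real.log_mul (ha_pos j).ne' (hs0_pos j).ne']
    have h2 : Real.sqrt (a j * s0 j) ≤ m j := by
      rw [Real.sqrt_mul (ha_pos j).le]
      have := Real.sq_sqrt (ha_pos j).le
      have := Real.sq_sqrt (hs0_pos j).le
      have := sq_nonneg (Real.sqrt (a j) - Real.sqrt (s0 j))
      simp only [hm_def]
      nlinarith
    rw [h1]
    exact Real.log_le_log (Real.sqrt_pos.2 (mul_pos (ha_pos j) (hs0_pos j))) h2
  have hj_lt : (Real.log (a j1) + Real.log (s0 j1)) / 2 < Real.log (m j1) := by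
    have hsne : Real.sqrt (a j1) ≠ Real.sqrt (s0 j1) := by
      intro h
      apply hj1
      rw [← Real.sq_sqrt (ha_pos j1).le, ← Real.sq_sqrt (hs0_pos j1).le, h]
    have h1 : (Real.log (a j1) + Real.log (s0 j1)) / 2
        = Real.log (Real.sqrt (a j1 * s0 j1)) := by
      rw [Real.log_sqrt (mul_nonneg (ha_pos j1).le (hs0_pos j1).le),
        Real.log_mul (ha_pos j1).ne' (hs0_pos j1).ne']
    have hsq : 0 < (Real.sqrt (a j1) - Real.sqrt (s0 j1)) ^ 2 :=
      lt_of_le_of_ne (sq_nonneg _) (Ne.symm (pow_ne_zero _ (sub_ne_zero.2 hsne)))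
    have h2 : Real.sqrt (a j1 * s0 j1) < m j1 := by
      rw [Real.sqrt_mul (ha_pos j1).le]
      have := Real.sq_sqrt (ha_pos j1).le
      have := Real.sq_sqrt (hs0_pos j1).le
      simp only [hm_def]
      nlinarith
    rw [h1]
    exact Real.log_lt_log (Real.sqrt_pos.2 (mul_pos (ha_pos j1) (hs0_pos j1))) h2
  have hsum_lt : ∑ j, q0 j * ((Real.log (a j) + Real.log (s0 j)) / 2)
      < ∑ j, q0 j * Real.log (m j) := by
    apply Finset.sum_lt_sum
    · exact fun j _ => mul_le_mul_of_nonneg_left (hj_le j) (hq0 j).le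
    · exact ⟨j1, Finset.mem_univ j1, mul_lt_mul_of_pos_left hj_lt (hq0 j1)⟩
  have hsplit : ∑ j, q0 j * ((Real.log (a j) + Real.log (s0 j)) / 2)
      = ((∑ j, q0 j * Real.log (a j)) + ∑ j, q0 j * Real.log (s0 j)) / 2 := by
    rw [← Finset.sum_add_distrib, Finset.sum_div]
    exact Finset.sum_congr rfl fun j _ => by ring
  have hm_le : ∑ j, q0 j * Real.log (m j) ≤ ∑ j, q0 j * Real.log (s0 j) := by
    have h := hopt0 m hmC (fun j _ => hm_pos j)
    rwa [hfilt0] at h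
  rw [hsplit] at hsum_lt
  linarith

lemma sstar_tendsto
    (C : Set (J → ℝ)) (hC_compact : IsCompact C) (hC_convex : Convex ℝ C)
    (M : ℝ) (hM1 : 1 ≤ M) (hM : ∀ s ∈ C, ∀ j, s j ≤ M)
    (y : J → ℝ) (hyC : y ∈ C) (hy : ∀ j, 0 < y j)
    (sstar : (J → ℝ) → J → ℝ)
    (hsstar : ∀ q : J → ℝ, (∀ j, 0 ≤ q j) → q ≠ 0 →
      sstar q ∈ C ∧ (∀ j, 0 < q j → 0 < sstar q j) ∧
      ∀ s ∈ C, (∀ j, 0 < q j → 0 < s j) →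
        ∑ j ∈ Finset.univ.filter (fun j => 0 < q j), q j * Real.log (s j)
          ≤ ∑ j ∈ Finset.univ.filter (fun j => 0 < q j), q j * Real.log (sstar q j))
    (q0 : J → ℝ) (hq0 : ∀ j, 0 < q0 j) :
    Tendsto sstar (𝓝[{q : J → ℝ | ∀ j, 0 < q j}] q0) (𝓝 (sstar q0)) := by
  apply Filter.tendsto_of_subseq_tendsto
  intro pseq hpseq
  have h1 : Tendsto pseq atTop (𝓝 q0) := hpseq.mono_right nhdsWithin_le_nhds
  have h2 : ∀ᶠ n in atTop, ∀ j, 0 < pseq n j := hpseq.eventually eventually_mem_nhdsWithin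
  obtain ⟨N0, hN0⟩ := Filter.eventually_atTop.1 h2
  set p' : ℕ → J → ℝ := fun n => pseq (n + N0) with hp'_def
  have hp'_pos : ∀ n j, 0 < p' n j := fun n j => hN0 (n + N0) (Nat.le_add_left N0 n) j
  have hp'_lim : Tendsto p' atTop (𝓝 q0) := h1.comp (tendsto_add_atTop_nat N0)
  have hp'C : ∀ n, sstar (p' n) ∈ C := by
    intro n
    refine (hsstar (p' n) (fun j => (hp'_pos n j).le) ?_).1
    intro h
    have := hp'_pos n (Classical.arbitrary J)
    rw [h] at this; simp at this
  obtain ⟨a, haC, φ, hφ, hlim⟩ := hC_compact.tendsto_subseq hp'C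
  have ha : a = sstar q0 :=
    sstar_limit C hC_compact hC_convex M hM1 hM y hyC hy sstar hsstar q0 hq0
      (fun n => p' (φ n)) (fun n j => hp'_pos (φ n) j)
      (hp'_lim.comp hφ.tendsto_atTop) a hlim
  exact ⟨fun n => φ n + N0, by rw [ha] at hlim; exact hlim⟩

lemma driftBound {J R : Type} [Fintype J] [Fintype R] [Nonempty J] [Nonempty R]
    (K : R → ℕ) (hK : ∀ r, 1 ≤ K r) (link : R → ℕ → J)
    (hinj : ∀ r, ∀ k < K r, ∀ l < K r, link r k = link r l → k = l)
    (hcover : ∀ j, ∃ r, ∃ k < K r, link r k = j)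
    (abar : R → ℝ) (habar_pos : ∀ r, 0 < abar r)
    (C : Set (J → ℝ))
    (habarJ_int :
      (fun j => ∑ r ∈ Finset.univ.filter (fun r => ∃ k < K r, link r k = j), abar r)
        ∈ interior C)
    (sstar : (J → ℝ) → J → ℝ)
    (hsstar : ∀ q : J → ℝ, (∀ j, 0 ≤ q j) → q ≠ 0 →
      sstar q ∈ C ∧ (∀ j, 0 < q j → 0 < sstar q j) ∧
      ∀ s ∈ C, (∀ j, 0 < q j → 0 < s j) →
        ∑ j ∈ Finset.univ.filter (fun j => 0 < q j), q j * Real.log (s j)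
          ≤ ∑ j ∈ Finset.univ.filter (fun j => 0 < q j), q j * Real.log (sstar q j)) :
    ∃ ε > (0:ℝ), ∀ q : J → ℝ, (∀ j, 0 < q j) →
      ∀ u : R → ℕ → ℝ, (∀ r, ∀ k < K r, 0 < u r k) →
      (∀ j, (∑ r, ∑ k ∈ (Finset.range (K r)).filter (fun k => link r k = j), u r k)
          = sstar q j) →
      ∑ r, ∑ k ∈ Finset.range (K r),
        ((if k = 0 then abar r else u r (k - 1)) - u r k) * Real.log (u r k / abar r)
        ≤ -ε := by
  classical
  set aJ : J → ℝ :=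
    fun j => ∑ r ∈ Finset.univ.filter (fun r => ∃ k < K r, link r k = j), abar r with haJ_def
  have haJ_pos : ∀ j, 0 < aJ j := by
    intro j
    obtain ⟨r, k, hk, hl⟩ := hcover j
    exact Finset.sum_pos (fun r _ => habar_pos r)
      ⟨r, Finset.mem_filter.2 ⟨Finset.mem_univ r, ⟨k, hk, hl⟩⟩⟩
  obtain ⟨η, hη_pos, hball⟩ := Metric.mem_nhds_iff.1 (mem_interior_iff_mem_nhds.1 habarJ_int)
  set δ : ℝ := η / (2 * (‖aJ‖ + 1)) with hδ_def
  have hδ_pos : 0 < δ := by positivity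
  have hδC : (1 + δ) • aJ ∈ C := by
    apply hball
    rw [Metric.mem_ball, dist_eq_norm]
    have heq : (1 + δ) • aJ - aJ = δ • aJ := by
      rw [add_smul, one_smul]; abel
    rw [heq, norm_smul, Real.norm_eq_abs, abs_of_pos hδ_pos]
    have hpos : (0:ℝ) < ‖aJ‖ + 1 := by positivity
    calc δ * ‖aJ‖ ≤ δ * (‖aJ‖ + 1) := by
          exact mul_le_mul_of_nonneg_left (by linarith) hδ_pos.le
      _ = η / 2 := by
          rw [hδ_def]; field_simp
      _ < η := by linarith
  have hδs : ∀ j, ((1 + δ) • aJ) j = (1 + δ) * aJ j := fun j => rfl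
  set N : ℕ := Finset.univ.sup K with hN_def
  have hKN : ∀ r, K r ≤ N := fun r => Finset.le_sup (Finset.mem_univ r)
  have hN1 : 1 ≤ N := le_trans (hK (Classical.arbitrary R)) (hKN _)
  have hN0 : (0:ℝ) < (N:ℝ) := by exact_mod_cast lt_of_lt_of_le zero_lt_one hN1
  set c : ℝ := Finset.univ.inf' Finset.univ_nonempty
      (fun r => Real.sqrt ((1 + δ) * abar r) - Real.sqrt (abar r)) with hc_def
  have hc_pos : 0 < c := by
    rw [hc_def, Finset.lt_inf'_iff]
    intro r _
    have : Real.sqrt (abar r) < Real.sqrt ((1 + δ) * abar r) := by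
      apply Real.sqrt_lt_sqrt (habar_pos r).le
      nlinarith [habar_pos r]
    linarith
  have hc_le : ∀ r, c ≤ Real.sqrt ((1 + δ) * abar r) - Real.sqrt (abar r) :=
    fun r => Finset.inf'_le _ (Finset.mem_univ r)
  refine ⟨(c / (2 * N)) ^ 2, by positivity, ?_⟩
  set ε : ℝ := (c / (2 * N)) ^ 2 with hε_def
  have hε_pos : 0 < ε := by positivity
  have hsqeps : Real.sqrt ε = c / (2 * N) := Real.sqrt_sq (by positivity)
  intro q hq u hu hsum
  by_contra hcon
  push_neg at hcon
  -- definitions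
  set v : R → ℕ → ℝ := fun r k => if k = 0 then abar r else u r (k - 1) with hv_def
  have hv_pos : ∀ r, ∀ k, k ≤ K r → 0 < v r k := by
    intro r k hk
    cases k with
    | zero => simpa [hv_def] using habar_pos r
    | succ n =>
        have : n < K r := Nat.lt_of_succ_le hk
        simpa [hv_def] using hu r n this
  set τ : R → ℕ → ℝ := fun r k => u r k - v r k - v r k * Real.log (u r k / v r k)
    with hτ_def
  have hτ_sq : ∀ r, ∀ k, k < K r →
      (Real.sqrt (u r k) - Real.sqrt (v r k)) ^ 2 ≤ τ r k := by
    intro r k hk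
    exact sqrt_sq_le_phi (hv_pos r k hk.le) (hu r k hk)
  have hτ_nonneg : ∀ r, ∀ k, k < K r → 0 ≤ τ r k := by
    intro r k hk
    exact le_trans (sq_nonneg _) (hτ_sq r k hk)
  set G : R → ℕ → ℝ := fun r k => v r k * Real.log (v r k / abar r) - v r k with hG_def
  have hrow : ∀ r, ∑ k ∈ Finset.range (K r),
      ((if k = 0 then abar r else u r (k - 1)) - u r k) * Real.log (u r k / abar r)
      = (G r 0 - G r (K r)) - ∑ k ∈ Finset.range (K r), τ r k := by
    intro r
    rw [← Finset.sum_range_sub' (G r) (K r), ← Finset.sum_sub_distrib]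
    refine Finset.sum_congr rfl fun k hk => ?_
    have hk' := Finset.mem_range.1 hk
    have ha : 0 < v r k := hv_pos r k hk'.le
    have hb : 0 < u r k := hu r k hk'
    have hC : 0 < abar r := habar_pos r
    have hvk1 : v r (k + 1) = u r k := by simp [hv_def]
    show (v r k - u r k) * Real.log (u r k / abar r) = (G r k - G r (k + 1)) - τ r k
    rw [hG_def, hτ_def]
    simp only [hvk1]
    rw [Real.log_div hb.ne' hC.ne', Real.log_div ha.ne' hC.ne', Real.log_div hb.ne' ha.ne']
    ring
  have hS_le : ∑ r, ∑ k ∈ Finset.range (K r),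
      ((if k = 0 then abar r else u r (k - 1)) - u r k) * Real.log (u r k / abar r)
      ≤ - ∑ r, ∑ k ∈ Finset.range (K r), τ r k := by
    rw [Finset.sum_congr rfl fun r _ => hrow r, Finset.sum_sub_distrib]
    have h0 : ∑ r, (G r 0 - G r (K r)) ≤ 0 := by
      apply Finset.sum_nonpos
      intro r _
      have hG0 : G r 0 = - abar r := by
        simp [hG_def, hv_def, div_self (habar_pos r).ne']
      have hw : 0 < v r (K r) := hv_pos r (K r) le_rfl
      have := g_nonpos hw (habar_pos r)
      rw [hG0, hG_def]
      linarith
    linarith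
  have hτ_sum_lt : ∑ r, ∑ k ∈ Finset.range (K r), τ r k < ε := by linarith
  have hτ_lt : ∀ r, ∀ k, k < K r → τ r k < ε := by
    intro r k hk
    have h1 : τ r k ≤ ∑ k ∈ Finset.range (K r), τ r k :=
      Finset.single_le_sum (fun i hi => hτ_nonneg r i (Finset.mem_range.1 hi))
        (Finset.mem_range.2 hk)
    have h2 : ∑ k ∈ Finset.range (K r), τ r k
        ≤ ∑ r, ∑ k ∈ Finset.range (K r), τ r k :=
      Finset.single_le_sum
        (fun r' _ => Finset.sum_nonneg fun i hi => hτ_nonneg r' i (Finset.mem_range.1 hi))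
        (Finset.mem_univ r)
    linarith
  have hstep : ∀ r, ∀ k, k < K r →
      Real.sqrt (u r k) ≤ Real.sqrt (v r k) + Real.sqrt ε := by
    intro r k hk
    have h1 := hτ_sq r k hk
    have h2 := hτ_lt r k hk
    have h3 : Real.sqrt ε ^ 2 = ε := Real.sq_sqrt hε_pos.le
    nlinarith [Real.sqrt_nonneg ε, Real.sqrt_nonneg (u r k), Real.sqrt_nonneg (v r k)]
  have hchain : ∀ r, ∀ k, k < K r →
      Real.sqrt (u r k) ≤ Real.sqrt (abar r) + ((k:ℝ) + 1) * Real.sqrt ε := by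
    intro r k
    induction k with
    | zero =>
        intro hk
        have h1 := hstep r 0 hk
        have hv0 : v r 0 = abar r := by simp [hv_def]
        rw [hv0] at h1
        push_cast
        linarith
    | succ k ih =>
        intro hk
        have hk' : k < K r := Nat.lt_of_succ_lt hk
        have h1 := hstep r (k + 1) hk
        have hvk : v r (k + 1) = u r k := by simp [hv_def]
        rw [hvk] at h1
        have h2 := ih hk'
        push_cast
        push_cast at h2
        linarith
  -- extraction of a large coordinate
  have hq0 : ∀ j, 0 ≤ q j := fun j => (hq j).le
  have hqne : q ≠ 0 := by
    intro h
    have := hq (Classical.arbitrary J)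
    rw [h] at this
    simp at this
  obtain ⟨hsC, hspos, hopt⟩ := hsstar q hq0 hqne
  have hcomp := hopt ((1 + δ) • aJ) hδC (fun j _ => by
    rw [hδs j]; nlinarith [haJ_pos j])
  rw [Finset.filter_true_of_mem (fun j _ => hq j)] at hcomp
  have hjex : ∃ j, (1 + δ) * aJ j ≤ sstar q j := by
    by_contra hno
    push_neg at hno
    have hlt : ∑ j, q j * Real.log (sstar q j)
        < ∑ j, q j * Real.log (((1 + δ) • aJ) j) := by
      apply Finset.sum_lt_sum_of_nonempty Finset.univ_nonempty
      intro j _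
      apply mul_lt_mul_of_pos_left _ (hq j)
      rw [hδs j]
      exact Real.log_lt_log (hspos j (hq j)) (hno j)
    linarith
  obtain ⟨j0, hj0⟩ := hjex
  have haJd : ∑ r, ∑ _k ∈ (Finset.range (K r)).filter (fun k => link r k = j0), abar r
      = aJ j0 := (L3 K link hinj (fun _ r => abar r) j0).symm
  have hpair : ∃ r, ∃ k ∈ (Finset.range (K r)).filter (fun k => link r k = j0),
      (1 + δ) * abar r ≤ u r k := by
    by_contra hno
    push_neg at hno
    obtain ⟨r0, k0, hk0, hl0⟩ := hcover j0
    have hk0F : k0 ∈ (Finset.range (K r0)).filter (fun k => link r0 k = j0) :=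
      Finset.mem_filter.2 ⟨Finset.mem_range.2 hk0, hl0⟩
    have hlt : ∑ r, ∑ k ∈ (Finset.range (K r)).filter (fun k => link r k = j0), u r k
        < ∑ r, ∑ _k ∈ (Finset.range (K r)).filter (fun k => link r k = j0),
            (1 + δ) * abar r := by
      apply Finset.sum_lt_sum
      · intro r _
        exact Finset.sum_le_sum fun k hk => (hno r k hk).le
      · exact ⟨r0, Finset.mem_univ r0,
          Finset.sum_lt_sum (fun k hk => (hno r0 k hk).le) ⟨k0, hk0F, hno r0 k0 hk0F⟩⟩
    rw [hsum j0] at hlt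
    have hconst : ∑ r, ∑ _k ∈ (Finset.range (K r)).filter (fun k => link r k = j0),
        (1 + δ) * abar r = (1 + δ) * aJ j0 := by
      rw [← haJd, Finset.mul_sum]
      exact Finset.sum_congr rfl fun r _ => (Finset.mul_sum _ _ _).symm
    rw [hconst] at hlt
    linarith
  obtain ⟨r0, k0, hk0F, hu0⟩ := hpair
  obtain ⟨hk0r, _⟩ := Finset.mem_filter.1 hk0F
  have hk0 : k0 < K r0 := Finset.mem_range.1 hk0r
  -- final contradiction
  have h1 := hchain r0 k0 hk0
  have h2 : Real.sqrt ((1 + δ) * abar r0) ≤ Real.sqrt (u r0 k0) := Real.sqrt_le_sqrt hu0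
  have h3 := hc_le r0
  have h4 : ((k0:ℝ) + 1) ≤ (N:ℝ) := by
    have : k0 + 1 ≤ N := le_trans hk0 (hKN r0)
    exact_mod_cast this
  have h5 : ((k0:ℝ) + 1) * Real.sqrt ε ≤ (N:ℝ) * Real.sqrt ε :=
    mul_le_mul_of_nonneg_right h4 (Real.sqrt_nonneg ε)
  have h6 : (N:ℝ) * Real.sqrt ε = c / 2 := by
    rw [hsqeps]; field_simp
  linarith


section QOf
variable {J R : Type} [Fintype J] [Fintype R] (K : R → ℕ) (link : R → ℕ → J)

lemma qOf_alt (hinj : ∀ r, ∀ k < K r, ∀ l < K r, link r k = link r l → k = l)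
    (z : J → R → ℝ) (j : J) :
    qOf K link z j
      = ∑ r, ∑ k ∈ (Finset.range (K r)).filter (fun k => link r k = j), z (link r k) r :=
  L3 K link hinj z j

lemma qOf_pos (hcover : ∀ j, ∃ r, ∃ k < K r, link r k = j)
    (z : J → R → ℝ) (hz : ∀ r, ∀ k < K r, 0 < z (link r k) r) (j : J) :
    0 < qOf K link z j := by
  apply Finset.sum_pos
  · intro r hr
    obtain ⟨-, k, hk, hl⟩ := Finset.mem_filter.1 hr
    rw [← hl]
    exact hz r k hk
  · obtain ⟨r0, k0, hk0, hl0⟩ := hcover j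
    exact ⟨r0, Finset.mem_filter.2 ⟨Finset.mem_univ r0, ⟨k0, hk0, hl0⟩⟩⟩

end QOf

/-- Strictly negative drift of the entropy Lyapunov function along fluid
trajectories of the Proportional Scheduler: there is an `ε > 0`, depending only
on the network data, such that along any fluid trajectory, at almost every time
at which the state is strictly positive, `t ↦ H(x(t))` is differentiable with
derivative at most `-ε`. Local absolute continuity of `x` is expressed by
writing `x` as the integral of a locally (interval-)integrable function `d`. -/
theorem H_strictly_negative_drift {J R : Type} [Fintype J] [Fintype R]
    [Nonempty J] [Nonempty R]
    (K : R → ℕ) (hK : ∀ r, 1 ≤ K r)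
    (link : R → ℕ → J)
    (hlink_inj : ∀ r, ∀ k < K r, ∀ l < K r, link r k = link r l → k = l)
    (hcover : ∀ j, ∃ r, ∃ k < K r, link r k = j)
    (abar : R → ℝ) (habar_pos : ∀ r, 0 < abar r)
    (C : Set (J → ℝ)) (hC_compact : IsCompact C) (hC_convex : Convex ℝ C)
    (hC_int : (interior C).Nonempty) (hC_nonneg : ∀ s ∈ C, ∀ j, 0 ≤ s j)
    (habarJ_int :
      (fun j => ∑ r ∈ Finset.univ.filter (fun r => ∃ k < K r, link r k = j), abar r)
        ∈ interior C)
    (sstar : (J → ℝ) → J → ℝ)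
    (hsstar : ∀ q : J → ℝ, (∀ j, 0 ≤ q j) → q ≠ 0 →
      sstar q ∈ C ∧ (∀ j, 0 < q j → 0 < sstar q j) ∧
      ∀ s ∈ C, (∀ j, 0 < q j → 0 < s j) →
        ∑ j ∈ Finset.univ.filter (fun j => 0 < q j), q j * Real.log (s j)
          ≤ ∑ j ∈ Finset.univ.filter (fun j => 0 < q j), q j * Real.log (sstar q j)) :
    ∃ ε > (0 : ℝ), ∀ x d : ℝ → J → R → ℝ,
      (∀ j r, ∀ t ≥ (0 : ℝ), IntervalIntegrable (fun τ => d τ j r) volume 0 t) →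
      (∀ j r, ∀ t ≥ (0 : ℝ), x t j r = x 0 j r + ∫ τ in (0 : ℝ)..t, d τ j r) →
      (∀ t ≥ (0 : ℝ), ∀ r, ∀ k < K r, 0 ≤ x t (link r k) r) →
      (∀ᵐ t : ℝ, 0 ≤ t → (∀ r, ∀ k < K r, 0 < x t (link r k) r) →
        ∀ r, ∀ k < K r,
          HasDerivAt (fun τ => x τ (link r k) r)
            ((if k = 0 then abar r else
                x t (link r (k - 1)) r * sstar (qOf K link (x t)) (link r (k - 1)) /
                  qOf K link (x t) (link r (k - 1)))
              - x t (link r k) r * sstar (qOf K link (x t)) (link r k) /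
                  qOf K link (x t) (link r k)) t) →
      ∀ᵐ t : ℝ, 0 ≤ t → (∀ r, ∀ k < K r, 0 < x t (link r k) r) →
        ∃ dH ≤ -ε, HasDerivAt (fun τ => Hfun K link abar sstar (x τ)) dH t := by
  classical
  obtain ⟨M0, hM0⟩ := hC_compact.isBounded.exists_norm_le
  have hM1 : (1:ℝ) ≤ max M0 1 := le_max_right _ _
  have hM : ∀ s ∈ C, ∀ j, s j ≤ max M0 1 := by
    intro s hs j
    calc s j ≤ |s j| := le_abs_self _
      _ ≤ ‖s‖ := by rw [← Real.norm_eq_abs]; exact norm_le_pi_norm s j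
      _ ≤ M0 := hM0 s hs
      _ ≤ max M0 1 := le_max_left _ _
  obtain ⟨y, hy_int⟩ := hC_int
  have hyC : y ∈ C := interior_subset hy_int
  have hy_pos : ∀ j, 0 < y j := by
    intro j
    rcases lt_or_eq_of_le (hC_nonneg y hyC j) with h | h
    · exact h
    exfalso
    obtain ⟨rr, hrr_pos, hball⟩ := Metric.mem_nhds_iff.1 (mem_interior_iff_mem_nhds.1 hy_int)
    have hmem : Function.update y j (y j - rr / 2) ∈ C := by
      apply hball
      rw [Metric.mem_ball, dist_pi_lt_iff hrr_pos]
      intro i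
      rcases eq_or_ne i j with rfl | hij
      · rw [Function.update_self, Real.dist_eq, abs_of_nonpos (by linarith)]
        linarith
      · rw [Function.update_of_ne hij, dist_self]
        exact hrr_pos
    have h2 := hC_nonneg _ hmem j
    rw [Function.update_self] at h2
    linarith
  have hne_of_pos : ∀ (q' : J → ℝ), (∀ j, 0 < q' j) → q' ≠ 0 := by
    intro q' h hq'
    have := h (Classical.arbitrary J)
    rw [hq'] at this
    simp at this
  obtain ⟨ε, hε_pos, hdrift⟩ := driftBound K hK link hlink_inj hcover abar habar_pos C
    habarJ_int sstar hsstar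
  refine ⟨ε, hε_pos, ?_⟩
  intro x d _ _ _ hderiv
  filter_upwards [hderiv] with t hderAE ht hpos
  have hder := hderAE ht hpos
  have hq_pos : ∀ j, 0 < qOf K link (x t) j := qOf_pos K link hcover (x t) hpos
  obtain ⟨hsC, hspos', hopt⟩ := hsstar (qOf K link (x t)) (fun j => (hq_pos j).le)
    (hne_of_pos _ hq_pos)
  have hfiltq : (Finset.univ.filter fun j => 0 < qOf K link (x t) j) = Finset.univ :=
    Finset.filter_true_of_mem fun j _ => hq_pos j
  rw [hfiltq] at hopt
  have hs_pos : ∀ j, 0 < sstar (qOf K link (x t)) j := fun j => hspos' j (hq_pos j)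
  set u : R → ℕ → ℝ := fun r k =>
    x t (link r k) r * sstar (qOf K link (x t)) (link r k) / qOf K link (x t) (link r k)
    with hu_def
  have hu_pos : ∀ r, ∀ k, k < K r → 0 < u r k := fun r k hk =>
    div_pos (mul_pos (hpos r k hk) (hs_pos _)) (hq_pos _)
  set Dv : R → ℕ → ℝ := fun r k => (if k = 0 then abar r else u r (k - 1)) - u r k with hDv_def
  have hD : ∀ r, ∀ k, k < K r → HasDerivAt (fun τ => x τ (link r k) r) (Dv r k) t :=
    fun r k hk => hder r k hk
  refine ⟨∑ r, ∑ k ∈ Finset.range (K r), Dv r k * Real.log (u r k / abar r), ?_, ?_⟩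
  · -- drift bound
    have hsum : ∀ j, (∑ r, ∑ k ∈ (Finset.range (K r)).filter (fun k => link r k = j), u r k)
        = sstar (qOf K link (x t)) j := by
      intro j
      have h1 : ∑ r, ∑ k ∈ (Finset.range (K r)).filter (fun k => link r k = j), u r k
          = ∑ r ∈ Finset.univ.filter (fun r => ∃ k < K r, link r k = j),
              x t j r * sstar (qOf K link (x t)) j / qOf K link (x t) j :=
        (L3 K link hlink_inj
          (fun j' r => x t j' r * sstar (qOf K link (x t)) j' / qOf K link (x t) j') j).symm
      rw [h1]
      have h2 : ∑ r ∈ Finset.univ.filter (fun r => ∃ k < K r, link r k = j),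
          x t j r * sstar (qOf K link (x t)) j / qOf K link (x t) j
          = (∑ r ∈ Finset.univ.filter (fun r => ∃ k < K r, link r k = j), x t j r)
            * (sstar (qOf K link (x t)) j / qOf K link (x t) j) := by
        rw [Finset.sum_mul]
        exact Finset.sum_congr rfl fun r _ => by rw [mul_div_assoc]
      rw [h2]
      have h3 : (∑ r ∈ Finset.univ.filter (fun r => ∃ k < K r, link r k = j), x t j r)
          = qOf K link (x t) j := rfl
      rw [h3, mul_comm, div_mul_cancel₀ _ (hq_pos j).ne']
    have hval := hdrift (qOf K link (x t)) hq_pos u hu_pos hsum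
    calc ∑ r, ∑ k ∈ Finset.range (K r), Dv r k * Real.log (u r k / abar r)
        = ∑ r, ∑ k ∈ Finset.range (K r),
          ((if k = 0 then abar r else u r (k - 1)) - u r k) * Real.log (u r k / abar r) := by
          exact Finset.sum_congr rfl fun r _ => Finset.sum_congr rfl fun k _ => by
            rw [hDv_def]
      _ ≤ -ε := hval
  · -- differentiability
    have hT : ∀ᶠ τ in 𝓝 t, ∀ r, ∀ k < K r, 0 < x τ (link r k) r := by
      rw [eventually_all]
      intro r
      have h1 : ∀ᶠ τ in 𝓝 t, ∀ k ∈ Finset.range (K r), 0 < x τ (link r k) r := by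
        rw [Filter.eventually_all_finset]
        intro k hk
        exact (hD r k (Finset.mem_range.1 hk)).continuousAt.eventually
          (eventually_gt_nhds (hpos r k (Finset.mem_range.1 hk)))
      exact h1.mono fun τ h k hk => h k (Finset.mem_range.2 hk)
    set Qd : J → ℝ := fun j =>
      ∑ r, ∑ k ∈ (Finset.range (K r)).filter (fun k => link r k = j), Dv r k with hQd_def
    have hqD : ∀ j, HasDerivAt (fun τ => qOf K link (x τ) j) (Qd j) t := by
      intro j
      have hfun : (fun τ => qOf K link (x τ) j)
          = fun τ => ∑ r, ∑ k ∈ (Finset.range (K r)).filter (fun k => link r k = j),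
              x τ (link r k) r := funext fun τ => qOf_alt K link hlink_inj (x τ) j
      rw [hfun]
      exact HasDerivAt.fun_sum fun r _ => HasDerivAt.fun_sum fun k hk =>
        hD r k (Finset.mem_range.1 (Finset.mem_filter.1 hk).1)
    have hq_tend : Tendsto (fun τ => qOf K link (x τ)) (𝓝 t) (𝓝 (qOf K link (x t))) := by
      rw [tendsto_pi_nhds]
      exact fun j => (hqD j).continuousAt
    have hmemS : ∀ᶠ τ in 𝓝 t, qOf K link (x τ) ∈ {q' : J → ℝ | ∀ j, 0 < q' j} :=
      hT.mono fun τ hτ j => qOf_pos K link hcover (x τ) hτ j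
    have hs_tend : Tendsto (fun τ => sstar (qOf K link (x τ))) (𝓝 t)
        (𝓝 (sstar (qOf K link (x t)))) :=
      (sstar_tendsto C hC_compact hC_convex (max M0 1) hM1 hM y hyC hy_pos sstar hsstar
        (qOf K link (x t)) hq_pos).comp (tendsto_nhdsWithin_iff.2 ⟨hq_tend, hmemS⟩)
    have hlog_tend : ∀ j, Tendsto (fun τ => Real.log (sstar (qOf K link (x τ)) j)) (𝓝 t)
        (𝓝 (Real.log (sstar (qOf K link (x t)) j))) := fun j =>
      ((Real.continuousAt_log (hs_pos j).ne').tendsto).comp (tendsto_pi_nhds.1 hs_tend j)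
    set W : ℝ → ℝ := fun τ => ∑ j, qOf K link (x τ) j * Real.log (sstar (qOf K link (x τ)) j)
      with hW_def
    set Lin : ℝ → ℝ := fun τ => ∑ j, qOf K link (x τ) j * Real.log (sstar (qOf K link (x t)) j)
      with hLin_def
    have hLinD : HasDerivAt Lin
        (∑ j, Qd j * Real.log (sstar (qOf K link (x t)) j)) t := by
      rw [hLin_def]
      exact HasDerivAt.fun_sum fun j _ => (hqD j).mul_const _
    have hWLt : W t - Lin t = 0 := by
      rw [hW_def, hLin_def]
      simp
    set g : ℝ → ℝ := fun τ => ∑ j, (|Qd j| + 1) *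
      |Real.log (sstar (qOf K link (x τ)) j) - Real.log (sstar (qOf K link (x t)) j)|
      with hg_def
    have hE : HasDerivAt (fun τ => W τ - Lin τ) 0 t := by
      rw [hasDerivAt_iff_tendsto_slope]
      have hglim : Tendsto g (𝓝[≠] t) (𝓝 0) := by
        have h0 : Tendsto g (𝓝 t)
            (𝓝 (∑ j : J, (|Qd j| + 1) * |Real.log (sstar (qOf K link (x t)) j)
              - Real.log (sstar (qOf K link (x t)) j)|)) := by
          rw [hg_def]
          exact tendsto_finset_sum _ fun j _ =>
            (((hlog_tend j).sub_const _).abs).const_mul _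
        have h0' : (∑ j : J, (|Qd j| + 1) * |Real.log (sstar (qOf K link (x t)) j)
            - Real.log (sstar (qOf K link (x t)) j)|) = 0 := by
          simp
        rw [h0'] at h0
        exact h0.mono_left nhdsWithin_le_nhds
      have hq2 : ∀ᶠ τ in 𝓝[≠] t, ∀ j, |qOf K link (x τ) j - qOf K link (x t) j|
          ≤ (|Qd j| + 1) * |τ - t| := by
        rw [eventually_all]
        intro j
        have hsl := hasDerivAt_iff_tendsto_slope.1 (hqD j)
        have hev : ∀ᶠ v in 𝓝 (Qd j), |v| ≤ |Qd j| + 1 :=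
          (eventually_abs_sub_lt (Qd j) one_pos).mono fun v hv => by
            have := abs_sub_abs_le_abs_sub v (Qd j)
            linarith
        filter_upwards [hsl.eventually hev, eventually_mem_nhdsWithin] with τ hτ hτne
        have hτt : τ - t ≠ 0 := sub_ne_zero.2 hτne
        have hslope : qOf K link (x τ) j - qOf K link (x t) j =
            slope (fun τ' => qOf K link (x τ') j) t τ * (τ - t) := by
          rw [slope_def_field]
          field_simp
        rw [hslope, abs_mul]
        exact mul_le_mul_of_nonneg_right hτ (abs_nonneg _)
      have hbound : ∀ᶠ τ in 𝓝[≠] t, ‖slope (fun τ' => W τ' - Lin τ') t τ‖ ≤ g τ := by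
        filter_upwards [hq2, hT.filter_mono nhdsWithin_le_nhds, eventually_mem_nhdsWithin]
          with τ hq2τ hTτ hτne
        have hqτ_pos : ∀ j, 0 < qOf K link (x τ) j := qOf_pos K link hcover (x τ) hTτ
        obtain ⟨hsτC, hsτpos', hoptτ⟩ := hsstar (qOf K link (x τ)) (fun j => (hqτ_pos j).le)
          (hne_of_pos _ hqτ_pos)
        have hfiltτ : (Finset.univ.filter fun j => 0 < qOf K link (x τ) j) = Finset.univ :=
          Finset.filter_true_of_mem fun j _ => hqτ_pos j
        rw [hfiltτ] at hoptτ
        have hlow : Lin τ ≤ W τ := by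
          have h := hoptτ (sstar (qOf K link (x t))) hsC (fun j _ => hs_pos j)
          rw [hW_def, hLin_def]
          exact h
        have hupp2 : ∑ j, qOf K link (x t) j * Real.log (sstar (qOf K link (x τ)) j)
            ≤ ∑ j, qOf K link (x t) j * Real.log (sstar (qOf K link (x t)) j) :=
          hopt (sstar (qOf K link (x τ))) hsτC (fun j _ => hsτpos' j (hqτ_pos j))
        have e1 : W τ - Lin τ = ∑ j, qOf K link (x τ) j *
            (Real.log (sstar (qOf K link (x τ)) j) - Real.log (sstar (qOf K link (x t)) j)) := by
          rw [hW_def, hLin_def, ← Finset.sum_sub_distrib]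
          exact Finset.sum_congr rfl fun j _ => by ring
        have e2 : W τ - Lin τ ≤ ∑ j, |qOf K link (x τ) j - qOf K link (x t) j| *
            |Real.log (sstar (qOf K link (x τ)) j) - Real.log (sstar (qOf K link (x t)) j)| := by
          rw [e1]
          have hsplit : ∑ j, qOf K link (x τ) j *
              (Real.log (sstar (qOf K link (x τ)) j) - Real.log (sstar (qOf K link (x t)) j))
              = ∑ j, (qOf K link (x τ) j - qOf K link (x t) j) *
                  (Real.log (sstar (qOf K link (x τ)) j) - Real.log (sstar (qOf K link (x t)) j))
                + ∑ j, qOf K link (x t) j *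
                  (Real.log (sstar (qOf K link (x τ)) j) - Real.log (sstar (qOf K link (x t)) j)) := by
            rw [← Finset.sum_add_distrib]
            exact Finset.sum_congr rfl fun j _ => by ring
          rw [hsplit]
          have h2nd : ∑ j, qOf K link (x t) j *
              (Real.log (sstar (qOf K link (x τ)) j) - Real.log (sstar (qOf K link (x t)) j)) ≤ 0 := by
            have hexp : ∑ j, qOf K link (x t) j *
                (Real.log (sstar (qOf K link (x τ)) j) - Real.log (sstar (qOf K link (x t)) j))
                = (∑ j, qOf K link (x t) j * Real.log (sstar (qOf K link (x τ)) j))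
                  - ∑ j, qOf K link (x t) j * Real.log (sstar (qOf K link (x t)) j) := by
              rw [← Finset.sum_sub_distrib]
              exact Finset.sum_congr rfl fun j _ => by ring
            rw [hexp]
            linarith
          have h1st : ∑ j, (qOf K link (x τ) j - qOf K link (x t) j) *
              (Real.log (sstar (qOf K link (x τ)) j) - Real.log (sstar (qOf K link (x t)) j))
              ≤ ∑ j, |qOf K link (x τ) j - qOf K link (x t) j| *
                |Real.log (sstar (qOf K link (x τ)) j) - Real.log (sstar (qOf K link (x t)) j)| :=
            Finset.sum_le_sum fun j _ => by
              calc (qOf K link (x τ) j - qOf K link (x t) j) *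
                  (Real.log (sstar (qOf K link (x τ)) j) - Real.log (sstar (qOf K link (x t)) j))
                  ≤ |(qOf K link (x τ) j - qOf K link (x t) j) *
                    (Real.log (sstar (qOf K link (x τ)) j)
                      - Real.log (sstar (qOf K link (x t)) j))| := le_abs_self _
                _ = _ := abs_mul _ _
          linarith
        have e3 : ∑ j, |qOf K link (x τ) j - qOf K link (x t) j| *
            |Real.log (sstar (qOf K link (x τ)) j) - Real.log (sstar (qOf K link (x t)) j)|
            ≤ g τ * |τ - t| := by
          rw [hg_def, Finset.sum_mul]
          apply Finset.sum_le_sum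
          intro j _
          calc |qOf K link (x τ) j - qOf K link (x t) j| *
              |Real.log (sstar (qOf K link (x τ)) j) - Real.log (sstar (qOf K link (x t)) j)|
              ≤ ((|Qd j| + 1) * |τ - t|) *
                |Real.log (sstar (qOf K link (x τ)) j) - Real.log (sstar (qOf K link (x t)) j)| :=
                mul_le_mul_of_nonneg_right (hq2τ j) (abs_nonneg _)
            _ = (|Qd j| + 1) *
                |Real.log (sstar (qOf K link (x τ)) j) - Real.log (sstar (qOf K link (x t)) j)|
                * |τ - t| := by ring
        have hτt : τ - t ≠ 0 := sub_ne_zero.2 hτne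
        have habs : 0 < |τ - t| := abs_pos.2 hτt
        have hslope_eq : slope (fun τ' => W τ' - Lin τ') t τ = (W τ - Lin τ) / (τ - t) := by
          rw [slope_def_field, hWLt, sub_zero]
        rw [hslope_eq, Real.norm_eq_abs, abs_div, div_le_iff₀ habs]
        calc |W τ - Lin τ| = W τ - Lin τ := abs_of_nonneg (by linarith)
          _ ≤ _ := e2
          _ ≤ g τ * |τ - t| := e3
          _ = g τ * |τ - t| := rfl
      exact squeeze_zero_norm' hbound hglim
    have hWD : HasDerivAt W (∑ j, Qd j * Real.log (sstar (qOf K link (x t)) j)) t := by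
      have h := hLinD.fun_add hE
      have hfun : (fun τ => Lin τ + (W τ - Lin τ)) = W := funext fun τ => by ring
      rw [hfun, add_zero] at h
      exact h
    have hP1D : HasDerivAt (fun τ => ∑ r, ∑ k ∈ Finset.range (K r),
        x τ (link r k) r * Real.log (x τ (link r k) r))
        (∑ r, ∑ k ∈ Finset.range (K r),
          (Dv r k * Real.log (x t (link r k) r)
            + x t (link r k) r * (Dv r k / x t (link r k) r))) t :=
      HasDerivAt.fun_sum fun r _ => HasDerivAt.fun_sum fun k hk =>
        (hD r k (Finset.mem_range.1 hk)).mul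
          ((hD r k (Finset.mem_range.1 hk)).log (hpos r k (Finset.mem_range.1 hk)).ne')
    have hP3D : HasDerivAt (fun τ => ∑ j, qOf K link (x τ) j * Real.log (qOf K link (x τ) j))
        (∑ j, (Qd j * Real.log (qOf K link (x t) j)
          + qOf K link (x t) j * (Qd j / qOf K link (x t) j))) t :=
      HasDerivAt.fun_sum fun j _ => (hqD j).mul ((hqD j).log (hq_pos j).ne')
    have hP4D : HasDerivAt (fun τ => ∑ r, ∑ k ∈ Finset.range (K r),
        x τ (link r k) r * Real.log (abar r))
        (∑ r, ∑ k ∈ Finset.range (K r), Dv r k * Real.log (abar r)) t :=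
      HasDerivAt.fun_sum fun r _ => HasDerivAt.fun_sum fun k hk =>
        (hD r k (Finset.mem_range.1 hk)).mul_const _
    have hfinal := ((hP1D.add hWD).sub hP3D).sub hP4D
    have hEq : (fun τ => Hfun K link abar sstar (x τ)) =ᶠ[𝓝 t]
        (fun τ => (∑ r, ∑ k ∈ Finset.range (K r),
            x τ (link r k) r * Real.log (x τ (link r k) r))
          + W τ
          - (∑ j, qOf K link (x τ) j * Real.log (qOf K link (x τ) j))
          - (∑ r, ∑ k ∈ Finset.range (K r), x τ (link r k) r * Real.log (abar r))) := by
      filter_upwards [hT] with τ hτ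
      have hqτ_pos : ∀ j, 0 < qOf K link (x τ) j := qOf_pos K link hcover (x τ) hτ
      have hsτ_pos : ∀ j, 0 < sstar (qOf K link (x τ)) j := fun j =>
        (hsstar _ (fun j' => (hqτ_pos j').le) (hne_of_pos _ hqτ_pos)).2.1 j (hqτ_pos j)
      show Hfun K link abar sstar (x τ) = _
      rw [Hfun]
      have stepA : ∀ j, ∀ r ∈ Finset.univ.filter (fun r => ∃ k < K r, link r k = j),
          x τ j r * Real.log (x τ j r * sstar (qOf K link (x τ)) j
            / (qOf K link (x τ) j * abar r))
          = x τ j r * Real.log (x τ j r)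
            + x τ j r * Real.log (sstar (qOf K link (x τ)) j)
            - x τ j r * Real.log (qOf K link (x τ) j)
            - x τ j r * Real.log (abar r) := by
        intro j r hr
        obtain ⟨-, k, hk, hl⟩ := Finset.mem_filter.1 hr
        have hx : 0 < x τ j r := by rw [← hl]; exact hτ r k hk
        have hs := hsτ_pos j
        have hq := hqτ_pos j
        have ha := habar_pos r
        rw [Real.log_div (mul_pos hx hs).ne' (mul_pos hq ha).ne',
          Real.log_mul hx.ne' hs.ne', Real.log_mul hq.ne' ha.ne']
        ring
      rw [Finset.sum_congr rfl fun j _ => Finset.sum_congr rfl fun r hr => stepA j r hr]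
      rw [Finset.sum_congr rfl fun j _ => by
        rw [Finset.sum_sub_distrib, Finset.sum_sub_distrib, Finset.sum_add_distrib]]
      rw [Finset.sum_sub_distrib, Finset.sum_sub_distrib, Finset.sum_add_distrib]
      have p1 : ∑ j, ∑ r ∈ Finset.univ.filter (fun r => ∃ k < K r, link r k = j),
          x τ j r * Real.log (x τ j r)
          = ∑ r, ∑ k ∈ Finset.range (K r), x τ (link r k) r * Real.log (x τ (link r k) r) :=
        L1 K link hlink_inj (fun j r => x τ j r * Real.log (x τ j r))
      have p4 : ∑ j, ∑ r ∈ Finset.univ.filter (fun r => ∃ k < K r, link r k = j),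
          x τ j r * Real.log (abar r)
          = ∑ r, ∑ k ∈ Finset.range (K r), x τ (link r k) r * Real.log (abar r) :=
        L1 K link hlink_inj (fun j r => x τ j r * Real.log (abar r))
      have p2 : ∑ j, ∑ r ∈ Finset.univ.filter (fun r => ∃ k < K r, link r k = j),
          x τ j r * Real.log (sstar (qOf K link (x τ)) j) = W τ := by
        rw [hW_def]
        exact Finset.sum_congr rfl fun j _ => (Finset.sum_mul _ _ _).symm
      have p3 : ∑ j, ∑ r ∈ Finset.univ.filter (fun r => ∃ k < K r, link r k = j),
          x τ j r * Real.log (qOf K link (x τ) j)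
          = ∑ j, qOf K link (x τ) j * Real.log (qOf K link (x τ) j) :=
        Finset.sum_congr rfl fun j _ => (Finset.sum_mul _ _ _).symm
      rw [p1, p2, p3, p4]
    rw [hEq.hasDerivAt_iff]
    -- value equality
    have c1 : ∑ r, ∑ k ∈ Finset.range (K r),
        (Dv r k * Real.log (x t (link r k) r)
          + x t (link r k) r * (Dv r k / x t (link r k) r))
        = (∑ r, ∑ k ∈ Finset.range (K r), Dv r k * Real.log (x t (link r k) r))
          + ∑ r, ∑ k ∈ Finset.range (K r), Dv r k := by
      rw [← Finset.sum_add_distrib]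
      refine Finset.sum_congr rfl fun r _ => ?_
      rw [← Finset.sum_add_distrib]
      refine Finset.sum_congr rfl fun k hk => ?_
      have hx := (hpos r k (Finset.mem_range.1 hk)).ne'
      field_simp
    have c3 : ∑ j, (Qd j * Real.log (qOf K link (x t) j)
        + qOf K link (x t) j * (Qd j / qOf K link (x t) j))
        = (∑ j, Qd j * Real.log (qOf K link (x t) j)) + ∑ j, Qd j := by
      rw [← Finset.sum_add_distrib]
      refine Finset.sum_congr rfl fun j _ => ?_
      have hq := (hq_pos j).ne'
      field_simp
    have c2 : ∑ j, Qd j = ∑ r, ∑ k ∈ Finset.range (K r), Dv r k :=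
      L2 K link (fun r k => Dv r k)
    have c4gen : ∀ (c : J → ℝ), ∑ j, Qd j * c j
        = ∑ r, ∑ k ∈ Finset.range (K r), Dv r k * c (link r k) := by
      intro c
      have h1 : ∀ j, Qd j * c j
          = ∑ r, ∑ k ∈ (Finset.range (K r)).filter (fun k => link r k = j),
              Dv r k * c (link r k) := by
        intro j
        calc Qd j * c j
            = ∑ r, (∑ k ∈ (Finset.range (K r)).filter (fun k => link r k = j), Dv r k) * c j := by
              rw [hQd_def, Finset.sum_mul]
          _ = ∑ r, ∑ k ∈ (Finset.range (K r)).filter (fun k => link r k = j), Dv r k * c j :=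
              Finset.sum_congr rfl fun r _ => Finset.sum_mul _ _ _
          _ = ∑ r, ∑ k ∈ (Finset.range (K r)).filter (fun k => link r k = j),
              Dv r k * c (link r k) :=
              Finset.sum_congr rfl fun r _ => Finset.sum_congr rfl fun k hk => by
                rw [(Finset.mem_filter.1 hk).2]
      rw [Finset.sum_congr rfl fun j _ => h1 j]
      exact L2 K link (fun r k => Dv r k * c (link r k))
    have c4s : ∑ j, Qd j * Real.log (sstar (qOf K link (x t)) j)
        = ∑ r, ∑ k ∈ Finset.range (K r),
            Dv r k * Real.log (sstar (qOf K link (x t)) (link r k)) :=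
      c4gen (fun j => Real.log (sstar (qOf K link (x t)) j))
    have c4q : ∑ j, Qd j * Real.log (qOf K link (x t) j)
        = ∑ r, ∑ k ∈ Finset.range (K r),
            Dv r k * Real.log (qOf K link (x t) (link r k)) :=
      c4gen (fun j => Real.log (qOf K link (x t) j))
    have hterm : ∀ r, ∀ k ∈ Finset.range (K r),
        Dv r k * Real.log (u r k / abar r)
        = Dv r k * Real.log (x t (link r k) r)
          + Dv r k * Real.log (sstar (qOf K link (x t)) (link r k))
          - Dv r k * Real.log (qOf K link (x t) (link r k))
          - Dv r k * Real.log (abar r) := by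
      intro r k hk
      have hk' := Finset.mem_range.1 hk
      have hx := hpos r k hk'
      have hs := hs_pos (link r k)
      have hq := hq_pos (link r k)
      have ha := habar_pos r
      have hu : u r k = x t (link r k) r * sstar (qOf K link (x t)) (link r k)
          / qOf K link (x t) (link r k) := by rw [hu_def]
      rw [Real.log_div (hu_pos r k hk').ne' ha.ne', hu,
        Real.log_div (mul_pos hx hs).ne' hq.ne', Real.log_mul hx.ne' hs.ne']
      ring
    have hval : ∑ r, ∑ k ∈ Finset.range (K r), Dv r k * Real.log (u r k / abar r)
        = (∑ r, ∑ k ∈ Finset.range (K r),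
            (Dv r k * Real.log (x t (link r k) r)
              + x t (link r k) r * (Dv r k / x t (link r k) r))
          + ∑ j, Qd j * Real.log (sstar (qOf K link (x t)) j)
          - ∑ j, (Qd j * Real.log (qOf K link (x t) j)
              + qOf K link (x t) j * (Qd j / qOf K link (x t) j)))
          - ∑ r, ∑ k ∈ Finset.range (K r), Dv r k * Real.log (abar r) := by
      rw [c1, c3, c4s, c4q, c2]
      rw [Finset.sum_congr rfl fun r _ => Finset.sum_congr rfl fun k hk => hterm r k hk]
      rw [Finset.sum_congr rfl fun r _ => by
        rw [Finset.sum_sub_distrib, Finset.sum_sub_distrib, Finset.sum_add_distrib]]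
      rw [Finset.sum_sub_distrib, Finset.sum_sub_distrib, Finset.sum_add_distrib]
      ring
    rw [hval]
    exact hfinal
end
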